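/- Let C be a monoidal category and let (e, η, μ) and (e', η', μ') be monoid objects in C such that η ▷ e, e ◁ η, η' ▷ e' and e' ◁ η' are all isomorphisms (both are idempotent monoid objects). Then any morphism f : e ⟶ e' in C with η ≫ f = η' is automatically a morphism of monoid objects (it commutes with the multiplications), and there is at most one morphism f : e ⟶ e' in C with η ≫ f = η'. -/

import Mathlib

open CategoryTheory MonoidalCategory

/-- Given two idempotent monoid objects `M`, `N` in a monoidal category (i.e. the
whiskerings of their units are isomorphisms), any morphism of underlying objects
compatible with the units is automatically a morphism of monoid objects, and there is at
most one morphism of underlying objects compatible with the units. -/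
theorem idempotent_mon_hom_unique {C : Type*} [Category C] [MonoidalCategory C]
    (M N : Mon C)
    (hM₁ : IsIso (MonObj.one (X := M.X) ▷ M.X)) (hM₂ : IsIso (M.X ◁ MonObj.one (X := M.X)))
    (hN₁ : IsIso (MonObj.one (X := N.X) ▷ N.X)) (hN₂ : IsIso (N.X ◁ MonObj.one (X := N.X))) :
    (∀ f : M.X ⟶ N.X, MonObj.one (X := M.X) ≫ f = MonObj.one (X := N.X) →
      MonObj.mul (X := M.X) ≫ f = (f ⊗ₘ f) ≫ MonObj.mul (X := N.X)) ∧
    (∀ f g : M.X ⟶ N.X, MonObj.one (X := M.X) ≫ f = MonObj.one (X := N.X) →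
      MonObj.one (X := M.X) ≫ g = MonObj.one (X := N.X) → f = g) := by
  constructor
  · intro f hf
    rw [← cancel_epi (MonObj.one (X := M.X) ▷ M.X)]
    have h1 : (MonObj.one (X := M.X) ▷ M.X) ≫ (f ⊗ₘ f) = (𝟙_ C ◁ f) ≫ (MonObj.one (X := N.X) ▷ N.X) := by
      rw [← tensorHom_id, tensorHom_comp_tensorHom, hf, Category.id_comp, tensorHom_def']
    rw [reassoc_of% MonObj.one_mul M.X, reassoc_of% h1, MonObj.one_mul N.X,
      leftUnitor_naturality]
  · intro f g hf hg
    have hmulM : MonObj.mul (X := M.X) = inv (MonObj.one (X := M.X) ▷ M.X) ≫ (λ_ M.X).hom := by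
      rw [IsIso.eq_inv_comp, MonObj.one_mul]
    haveI : IsIso (MonObj.mul (X := M.X)) := by rw [hmulM]; infer_instance
    have hinv : (ρ_ M.X).inv ≫ (M.X ◁ MonObj.one (X := M.X)) = (λ_ M.X).inv ≫ (MonObj.one (X := M.X) ▷ M.X) := by
      rw [← cancel_mono (MonObj.mul (X := M.X)), Category.assoc, Category.assoc, MonObj.mul_one,
        MonObj.one_mul, Iso.inv_hom_id, Iso.inv_hom_id]
    have hleft : (MonObj.one (X := M.X) ▷ M.X) ≫ (f ⊗ₘ g) ≫ MonObj.mul (X := N.X) = (λ_ M.X).hom ≫ g := by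
      have h1 : (MonObj.one (X := M.X) ▷ M.X) ≫ (f ⊗ₘ g) = (𝟙_ C ◁ g) ≫ (MonObj.one (X := N.X) ▷ N.X) := by
        rw [← tensorHom_id, tensorHom_comp_tensorHom, hf, Category.id_comp, tensorHom_def']
      rw [reassoc_of% h1, MonObj.one_mul, leftUnitor_naturality]
    have hright : (M.X ◁ MonObj.one (X := M.X)) ≫ (f ⊗ₘ g) ≫ MonObj.mul (X := N.X) = (ρ_ M.X).hom ≫ f := by
      have h1 : (M.X ◁ MonObj.one (X := M.X)) ≫ (f ⊗ₘ g) = (f ▷ 𝟙_ C) ≫ (N.X ◁ MonObj.one (X := N.X)) := by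
        rw [← id_tensorHom, tensorHom_comp_tensorHom, hg, Category.id_comp, MonoidalCategory.tensorHom_def]
      rw [reassoc_of% h1, MonObj.mul_one, rightUnitor_naturality]
    calc f = (ρ_ M.X).inv ≫ (M.X ◁ MonObj.one (X := M.X)) ≫ (f ⊗ₘ g) ≫ MonObj.mul (X := N.X) := by
            rw [hright, Iso.inv_hom_id_assoc]
      _ = (λ_ M.X).inv ≫ (MonObj.one (X := M.X) ▷ M.X) ≫ (f ⊗ₘ g) ≫ MonObj.mul (X := N.X) := by
            rw [← Category.assoc, hinv, Category.assoc]
      _ = g := by rw [hleft, Iso.inv_hom_id_assoc]
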